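/- (Case A.I.3b, hybrid CSIT 2, Case III.) If M1 > M2 > N1 ≥ N2 ≥ 1, M1 ≤ N1+N2, and N2(M1−N1) > M1(M2−N1), then Ph2 = {(d1,d2) ∈ ℝ² : 0 ≤ d1 ≤ N1, d2 ≥ 0, d1/M1 + d2/N2 ≤ 1, d1+d2 ≤ M2}; moreover the point Q = (M1(M2−N2)/(M1−N2), N2(M1−M2)/(M1−N2)) satisfies Q1/M1 + Q2/N2 = 1 and Q1 + Q2 = M2, and 0 < M1(M2−N2)/(M1−N2) < N1, so that both of these constraints are active at Q. -/

import Mathlib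

open Set

noncomputable section

/-- Bound L01 : 0 ≤ d1 ≤ min(M1,N1). -/
def L01 (M1 N1 : ℕ) (d : ℝ × ℝ) : Prop := 0 ≤ d.1 ∧ d.1 ≤ min (M1 : ℝ) (N1 : ℝ)

/-- Bound L02 : 0 ≤ d2 ≤ min(M2,N2). -/
def L02 (M2 N2 : ℕ) (d : ℝ × ℝ) : Prop := 0 ≤ d.2 ∧ d.2 ≤ min (M2 : ℝ) (N2 : ℝ)

/-- Bound L1 : d1/min(N1+N2,M1) + d2/min(N2,M1) ≤ min(N2,M1+M2)/min(N2,M1). -/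
def L1 (M1 M2 N1 N2 : ℕ) (d : ℝ × ℝ) : Prop :=
  d.1 / min ((N1 : ℝ) + (N2 : ℝ)) (M1 : ℝ) + d.2 / min (N2 : ℝ) (M1 : ℝ) ≤
    min (N2 : ℝ) ((M1 : ℝ) + (M2 : ℝ)) / min (N2 : ℝ) (M1 : ℝ)

/-- Bound L2 : d1/min(N1,M2) + d2/min(N1+N2,M2) ≤ min(N1,M1+M2)/min(N1,M2). -/
def L2 (M1 M2 N1 N2 : ℕ) (d : ℝ × ℝ) : Prop :=
  d.1 / min (N1 : ℝ) (M2 : ℝ) + d.2 / min ((N1 : ℝ) + (N2 : ℝ)) (M2 : ℝ) ≤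
    min (N1 : ℝ) ((M1 : ℝ) + (M2 : ℝ)) / min (N1 : ℝ) (M2 : ℝ)

/-- Bound L3 : d1+d2 ≤ min(M1+M2, N1+N2, max(M1,N2), max(M2,N1)). -/
def L3 (M1 M2 N1 N2 : ℕ) (d : ℝ × ℝ) : Prop :=
  d.1 + d.2 ≤
    min (min ((M1 : ℝ) + (M2 : ℝ)) ((N1 : ℝ) + (N2 : ℝ)))
      (min (max (M1 : ℝ) (N2 : ℝ)) (max (M2 : ℝ) (N1 : ℝ)))

/-- Bound L4 : d1 + d2·(N1+2N2−M2)/N2 ≤ N1+N2. -/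
def L4 (M2 N1 N2 : ℕ) (d : ℝ × ℝ) : Prop :=
  d.1 + d.2 * (((N1 : ℝ) + 2 * (N2 : ℝ) - (M2 : ℝ)) / (N2 : ℝ)) ≤ (N1 : ℝ) + (N2 : ℝ)

/-- Bound L5 : d2 + d1·(N2+2N1−M1)/N1 ≤ N1+N2. -/
def L5 (M1 N1 N2 : ℕ) (d : ℝ × ℝ) : Prop :=
  d.2 + d.1 * (((N2 : ℝ) + 2 * (N1 : ℝ) - (M1 : ℝ)) / (N1 : ℝ)) ≤ (N1 : ℝ) + (N2 : ℝ)

/-- Condition 1 : M1 > N1+N2−M2 > N1 > N2 > M2 > N2(N2−M2)/(N1−M2). -/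
def Cond1 (M1 M2 N1 N2 : ℕ) : Prop :=
  (M1 : ℝ) > (N1 : ℝ) + (N2 : ℝ) - (M2 : ℝ) ∧
  (N1 : ℝ) + (N2 : ℝ) - (M2 : ℝ) > (N1 : ℝ) ∧
  (N1 : ℝ) > (N2 : ℝ) ∧ (N2 : ℝ) > (M2 : ℝ) ∧
  (M2 : ℝ) > (N2 : ℝ) * ((N2 : ℝ) - (M2 : ℝ)) / ((N1 : ℝ) - (M2 : ℝ))

/-- Condition 2 : M2 > N1+N2−M1 > N2 > N1 > M1 > N1(N1−M1)/(N2−M1). -/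
def Cond2 (M1 M2 N1 N2 : ℕ) : Prop :=
  (M2 : ℝ) > (N1 : ℝ) + (N2 : ℝ) - (M1 : ℝ) ∧
  (N1 : ℝ) + (N2 : ℝ) - (M1 : ℝ) > (N2 : ℝ) ∧
  (N2 : ℝ) > (N1 : ℝ) ∧ (N1 : ℝ) > (M1 : ℝ) ∧
  (M1 : ℝ) > (N1 : ℝ) * ((N1 : ℝ) - (M1 : ℝ)) / ((N2 : ℝ) - (M1 : ℝ))

/-- DoF outer-bound region under perfect and instantaneous CSIT. -/
def Pinst (M1 M2 N1 N2 : ℕ) : Set (ℝ × ℝ) :=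
  {d | L01 M1 N1 d ∧ L02 M2 N2 d ∧ L3 M1 M2 N1 N2 d}

/-- DoF outer-bound region under hybrid CSIT 1. -/
def Ph1 (M1 M2 N1 N2 : ℕ) : Set (ℝ × ℝ) :=
  {d | L01 M1 N1 d ∧ L02 M2 N2 d ∧ L2 M1 M2 N1 N2 d ∧ L3 M1 M2 N1 N2 d ∧
    (Cond2 M1 M2 N1 N2 → L5 M1 N1 N2 d)}

/-- DoF outer-bound region under hybrid CSIT 2. -/
def Ph2 (M1 M2 N1 N2 : ℕ) : Set (ℝ × ℝ) :=
  {d | L01 M1 N1 d ∧ L02 M2 N2 d ∧ L1 M1 M2 N1 N2 d ∧ L3 M1 M2 N1 N2 d ∧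
    (Cond1 M1 M2 N1 N2 → L4 M2 N1 N2 d)}

/-- DoF outer-bound region under delayed CSIT. -/
def Pd (M1 M2 N1 N2 : ℕ) : Set (ℝ × ℝ) :=
  {d | L01 M1 N1 d ∧ L02 M2 N2 d ∧ L1 M1 M2 N1 N2 d ∧ L2 M1 M2 N1 N2 d ∧
    L3 M1 M2 N1 N2 d ∧ (Cond1 M1 M2 N1 N2 → L4 M2 N1 N2 d) ∧
    (Cond2 M1 M2 N1 N2 → L5 M1 N1 N2 d)}

/-- Case A.I.3b, hybrid CSIT 2, Case III: if M1 > M2 > N1 ≥ N2 ≥ 1, M1 ≤ N1+N2 and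
N2(M1−N1) > M1(M2−N1), then Ph2 = {(d1,d2) : 0 ≤ d1 ≤ N1, d2 ≥ 0, d1/M1 + d2/N2 ≤ 1,
d1+d2 ≤ M2}; moreover the corner point Q = (M1(M2−N2)/(M1−N2), N2(M1−M2)/(M1−N2))
satisfies Q1/M1 + Q2/N2 = 1, Q1 + Q2 = M2 and 0 < Q1 < N1. -/
theorem caseAI3b_h2_III (M1 M2 N1 N2 : ℕ)
    (h1 : M1 > M2) (h2 : M2 > N1) (h3 : N1 ≥ N2) (h4 : 1 ≤ N2) (h5 : M1 ≤ N1 + N2)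
    (h6 : (N2 : ℝ) * ((M1 : ℝ) - (N1 : ℝ)) > (M1 : ℝ) * ((M2 : ℝ) - (N1 : ℝ))) :
    Ph2 M1 M2 N1 N2 =
      {d : ℝ × ℝ | 0 ≤ d.1 ∧ d.1 ≤ (N1 : ℝ) ∧ 0 ≤ d.2 ∧
        d.1 / (M1 : ℝ) + d.2 / (N2 : ℝ) ≤ 1 ∧ d.1 + d.2 ≤ (M2 : ℝ)} ∧
    ((M1 : ℝ) * ((M2 : ℝ) - (N2 : ℝ)) / ((M1 : ℝ) - (N2 : ℝ))) / (M1 : ℝ) +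
      ((N2 : ℝ) * ((M1 : ℝ) - (M2 : ℝ)) / ((M1 : ℝ) - (N2 : ℝ))) / (N2 : ℝ) = 1 ∧
    (M1 : ℝ) * ((M2 : ℝ) - (N2 : ℝ)) / ((M1 : ℝ) - (N2 : ℝ)) +
      (N2 : ℝ) * ((M1 : ℝ) - (M2 : ℝ)) / ((M1 : ℝ) - (N2 : ℝ)) = (M2 : ℝ) ∧
    0 < (M1 : ℝ) * ((M2 : ℝ) - (N2 : ℝ)) / ((M1 : ℝ) - (N2 : ℝ)) ∧
    (M1 : ℝ) * ((M2 : ℝ) - (N2 : ℝ)) / ((M1 : ℝ) - (N2 : ℝ)) < (N1 : ℝ) := by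
  have hm2n1 : (N1 : ℝ) < M2 := by exact_mod_cast h2
  have hm1m2 : (M2 : ℝ) < M1 := by exact_mod_cast h1
  have hn12 : (N2 : ℝ) ≤ N1 := by exact_mod_cast h3
  have hn2 : (1 : ℝ) ≤ N2 := by exact_mod_cast h4
  have h5' : (M1 : ℝ) ≤ (N1 : ℝ) + N2 := by exact_mod_cast h5
  have hN2pos : (0 : ℝ) < N2 := by linarith
  have hM1pos : (0 : ℝ) < M1 := by linarith
  have hM1N2 : (N2 : ℝ) < M1 := by linarith
  have hnc1 : ¬ Cond1 M1 M2 N1 N2 := by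
    rintro ⟨-, -, -, hc, -⟩; linarith
  refine ⟨?_, ?_, ?_, ?_, ?_⟩
  · ext d
    simp only [Ph2, L01, L02, L1, L3, Set.mem_setOf_eq]
    rw [min_eq_right (le_of_lt (by linarith : (N1 : ℝ) < M1)),
        min_eq_right (le_of_lt (by linarith : (N2 : ℝ) < M2)),
        min_eq_right h5',
        min_eq_left (le_of_lt hM1N2),
        min_eq_left (by linarith : (N2 : ℝ) ≤ (M1 : ℝ) + M2),
        min_eq_right (by linarith : (N1 : ℝ) + N2 ≤ (M1 : ℝ) + M2),
        max_eq_left (le_of_lt hM1N2),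
        max_eq_left (le_of_lt hm2n1),
        min_eq_right (le_of_lt hm1m2),
        min_eq_right (by linarith : (M2 : ℝ) ≤ (N1 : ℝ) + N2),
        div_self (ne_of_gt hN2pos)]
    constructor
    · rintro ⟨⟨ha, hb⟩, ⟨hc, hd⟩, he, hf, -⟩
      exact ⟨ha, hb, hc, he, hf⟩
    · rintro ⟨ha, hb, hc, hd, he⟩
      have hd2 : d.2 ≤ N2 := by
        have h1' : 0 ≤ d.1 / M1 := div_nonneg ha (le_of_lt hM1pos)
        have : d.2 / N2 ≤ 1 := by linarith
        calc d.2 = d.2 / N2 * N2 := by field_simp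
          _ ≤ 1 * N2 := by nlinarith
          _ = N2 := one_mul _
      exact ⟨⟨ha, hb⟩, ⟨hc, hd2⟩, hd, he, fun h => absurd h hnc1⟩
  · have hne : (M1 : ℝ) - N2 ≠ 0 := by linarith
    have hne1 : (M1 : ℝ) ≠ 0 := ne_of_gt hM1pos
    have hne2 : (N2 : ℝ) ≠ 0 := ne_of_gt hN2pos
    field_simp
    ring
  · have hne : (M1 : ℝ) - N2 ≠ 0 := by linarith
    rw [← add_div, div_eq_iff hne]
    ring
  · apply div_pos (mul_pos hM1pos (by linarith)) (by linarith)
  · rw [div_lt_iff₀ (by linarith)]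
    nlinarith
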